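/- Let G be a finite cyclic group and M a finite G-module. Then the orders of Ĥ^0(G,M) and Ĥ^{-1}(G,M) are equal (the Herbrand quotient of a finite module is trivial). -/

import Mathlib

section TateCore

variable (G : Type*) [Group G] [Fintype G] (M : Type*) [AddCommGroup M] [DistribMulAction G M]

/-- The subgroup of `G`-invariant elements of `M`. -/
def invariants : AddSubgroup M where
  carrier := {x | ∀ g : G, g • x = x}
  zero_mem' := fun g => smul_zero g
  add_mem' := fun {a b} ha hb g => by rw [smul_add, ha g, hb g]
  neg_mem' := fun {a} ha g => by rw [smul_neg, ha g]

/-- The norm map `x ↦ ∑ g • x`. -/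
def tateNorm : M →+ M where
  toFun x := ∑ g : G, g • x
  map_zero' := by simp
  map_add' a b := by simp [smul_add, Finset.sum_add_distrib]

/-- The augmentation submodule `I_G · M`, generated by elements `g • x - x`. -/
def augSubgroup : AddSubgroup M :=
  AddSubgroup.closure {y | ∃ (g : G) (x : M), y = g • x - x}

/-- Tate cohomology `Ĥ⁰(G,M) = M^G / N_G M`. -/
abbrev TateH0 :=
  invariants G M ⧸ ((tateNorm G M).range.addSubgroupOf (invariants G M))

/-- Tate cohomology `Ĥ⁻¹(G,M) = M[N_G] / I_G M`. -/
abbrev TateHneg1 :=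
  (tateNorm G M).ker ⧸ ((augSubgroup G M).addSubgroupOf (tateNorm G M).ker)

variable {G M} {N : Type*} [AddCommGroup N] [DistribMulAction G N]

/-- The map on invariants induced by a `G`-equivariant homomorphism. -/
def invariantsMap (φ : M →+ N) (hφ : ∀ (g : G) (x : M), φ (g • x) = g • φ x) :
    invariants G M →+ invariants G N :=
  AddMonoidHom.codRestrict (φ.comp (invariants G M).subtype) _ (by
    rintro ⟨x, hx⟩ g
    simpa [← hφ g x] using congrArg φ (hx g))

/-- The map on `Ĥ⁰` induced by a `G`-equivariant homomorphism. -/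
def TateH0Map (φ : M →+ N) (hφ : ∀ (g : G) (x : M), φ (g • x) = g • φ x) :
    TateH0 G M →+ TateH0 G N :=
  QuotientAddGroup.map _ _ (invariantsMap φ hφ) (by
    rintro ⟨x, hx⟩ hmem
    rw [AddSubgroup.mem_addSubgroupOf] at hmem
    rw [AddSubgroup.mem_comap, AddSubgroup.mem_addSubgroupOf]
    obtain ⟨y, hy⟩ := hmem
    refine ⟨φ y, ?_⟩
    show ∑ g : G, g • φ y = _
    simp only [← hφ]
    rw [← map_sum]
    exact congrArg φ hy)

/-- The map on kernels of norms induced by a `G`-equivariant homomorphism. -/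
def normKerMap (φ : M →+ N) (hφ : ∀ (g : G) (x : M), φ (g • x) = g • φ x) :
    (tateNorm G M).ker →+ (tateNorm G N).ker :=
  AddMonoidHom.codRestrict (φ.comp (tateNorm G M).ker.subtype) _ (by
    rintro ⟨x, hx⟩
    rw [AddMonoidHom.mem_ker] at hx ⊢
    show ∑ g : G, g • φ x = 0
    simp only [← hφ]
    rw [← map_sum]
    change φ (tateNorm G M x) = 0
    rw [hx, map_zero])

/-- The map on `Ĥ⁻¹` induced by a `G`-equivariant homomorphism. -/
def TateHneg1Map (φ : M →+ N) (hφ : ∀ (g : G) (x : M), φ (g • x) = g • φ x) :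
    TateHneg1 G M →+ TateHneg1 G N :=
  QuotientAddGroup.map _ _ (normKerMap φ hφ) (by
    rintro ⟨x, hx⟩ hmem
    rw [AddSubgroup.mem_addSubgroupOf] at hmem
    rw [AddSubgroup.mem_comap, AddSubgroup.mem_addSubgroupOf]
    have : φ x ∈ (augSubgroup G M).map φ := AddSubgroup.mem_map_of_mem φ hmem
    have hle : (augSubgroup G M).map φ ≤ augSubgroup G N := by
      rw [augSubgroup, AddMonoidHom.map_closure]
      apply (AddSubgroup.closure_le _).mpr
      rintro y ⟨z, ⟨g, x', rfl⟩, rfl⟩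
      exact AddSubgroup.subset_closure ⟨g, φ x', by simp [hφ]⟩
    exact hle this)

end TateCore


section HerbAux

variable {G : Type*} [Group G] [Fintype G] {M : Type*} [AddCommGroup M] [DistribMulAction G M]

/-- The difference map `x ↦ g • x - x`. -/
def Dmap (M : Type*) [AddCommGroup M] [DistribMulAction G M] (g : G) : M →+ M :=
  DistribMulAction.toAddMonoidHom M g - AddMonoidHom.id M

lemma Dmap_apply (g : G) (x : M) : Dmap M g x = g • x - x := rfl

lemma zpow_smul_fixed {g : G} {x : M} (h : g • x = x) (n : ℤ) : g ^ n • x = x := by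
  have hinv : g⁻¹ • x = x := by
    conv_lhs => rw [← h]
    rw [inv_smul_smul]
  induction n using Int.induction_on with
  | zero => simp
  | succ n ih => rw [zpow_add_one, mul_smul, h, ih]
  | pred n ih => rw [zpow_sub_one, mul_smul, hinv, ih]

lemma invariants_eq_ker {g : G} (hg : ∀ h : G, h ∈ Subgroup.zpowers g) :
    invariants G M = (Dmap M g).ker := by
  ext x
  constructor
  · intro hx
    rw [AddMonoidHom.mem_ker, Dmap_apply, sub_eq_zero]
    exact hx g
  · intro hx k
    rw [AddMonoidHom.mem_ker, Dmap_apply, sub_eq_zero] at hx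
    obtain ⟨n, rfl⟩ := hg k
    exact zpow_smul_fixed hx n

lemma aug_eq_range {g : G} (hg : ∀ h : G, h ∈ Subgroup.zpowers g) :
    augSubgroup G M = (Dmap M g).range := by
  apply le_antisymm
  · rw [augSubgroup]
    apply (AddSubgroup.closure_le _).mpr
    rintro y ⟨h, x, rfl⟩
    obtain ⟨n, rfl⟩ := hg h
    show g ^ n • x - x ∈ (Dmap M g).range
    induction n using Int.induction_on with
    | zero => simpa using zero_mem (Dmap M g).range
    | succ n ih =>
      have e : g • (g ^ (n : ℤ) • x) = g ^ ((n : ℤ) + 1) • x := by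
        rw [smul_smul, ← zpow_one_add, add_comm]
      have : g ^ ((n : ℤ) + 1) • x - x = Dmap M g (g ^ (n : ℤ) • x) + (g ^ (n : ℤ) • x - x) := by
        rw [Dmap_apply, e]; abel
      rw [this]
      exact add_mem ⟨_, rfl⟩ ih
    | pred n ih =>
      have e : g • (g ^ (-(n : ℤ) - 1) • x) = g ^ (-(n : ℤ)) • x := by
        rw [smul_smul, ← zpow_one_add]
        congr 1
        ring
      have : g ^ (-(n : ℤ) - 1) • x - x
          = (g ^ (-(n : ℤ)) • x - x) - Dmap M g (g ^ (-(n : ℤ) - 1) • x) := by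
        rw [Dmap_apply, e]; abel
      rw [this]
      exact sub_mem ih ⟨_, rfl⟩
  · rintro y ⟨x, rfl⟩
    exact AddSubgroup.subset_closure ⟨g, x, rfl⟩

lemma norm_range_le_invariants : (tateNorm G M).range ≤ invariants G M := by
  rintro y ⟨x, rfl⟩ k
  show k • ∑ h : G, h • x = ∑ h : G, h • x
  rw [Finset.smul_sum]
  simp_rw [← mul_smul]
  exact Fintype.sum_equiv (Equiv.mulLeft k) _ _ (fun h => rfl)

lemma dmap_range_le_norm_ker (g : G) : (Dmap M g).range ≤ (tateNorm G M).ker := by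
  rintro y ⟨x, rfl⟩
  rw [AddMonoidHom.mem_ker, Dmap_apply, map_sub, sub_eq_zero]
  show ∑ h : G, h • (g • x) = ∑ h : G, h • x
  simp_rw [← mul_smul]
  exact Fintype.sum_equiv (Equiv.mulRight g) _ _ (fun h => rfl)

lemma card_ker_mul_card_range (f : M →+ M) [Finite M] :
    Nat.card f.ker * Nat.card f.range = Nat.card M := by
  have := AddSubgroup.card_eq_card_quotient_mul_card_addSubgroup (f.ker)
  rw [Nat.card_congr (QuotientAddGroup.quotientKerEquivRange f).toEquiv] at this
  rw [mul_comm]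
  exact this.symm

end HerbAux

/-- The Herbrand quotient of a finite module over a finite cyclic group is
trivial: `|Ĥ⁰(G, M)| = |Ĥ⁻¹(G, M)|`. -/
theorem card_tateH0_eq_card_tateHneg1
    (G M : Type*) [Group G] [Fintype G] [AddCommGroup M] [DistribMulAction G M]
    [Finite M] (hG : IsCyclic G) :
    Nat.card (TateH0 G M) = Nat.card (TateHneg1 G M) := by
  obtain ⟨g, hg⟩ := hG
  have hginv : invariants G M = (Dmap M g).ker := invariants_eq_ker hg
  have haug : augSubgroup G M = (Dmap M g).range := aug_eq_range hg
  -- cardinalities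
  have h0 : Nat.card (invariants G M)
      = Nat.card (TateH0 G M) * Nat.card (tateNorm G M).range := by
    rw [AddSubgroup.card_eq_card_quotient_mul_card_addSubgroup
      ((tateNorm G M).range.addSubgroupOf (invariants G M))]
    congr 1
    exact Nat.card_congr
      (AddSubgroup.addSubgroupOfEquivOfLe norm_range_le_invariants).toEquiv
  have h1 : Nat.card (tateNorm G M).ker
      = Nat.card (TateHneg1 G M) * Nat.card (Dmap M g).range := by
    rw [AddSubgroup.card_eq_card_quotient_mul_card_addSubgroup
      ((augSubgroup G M).addSubgroupOf (tateNorm G M).ker)]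
    congr 1
    rw [haug]
    exact Nat.card_congr
      (AddSubgroup.addSubgroupOfEquivOfLe (dmap_range_le_norm_ker g)).toEquiv
  have hD : Nat.card (Dmap M g).ker * Nat.card (Dmap M g).range = Nat.card M :=
    card_ker_mul_card_range _
  have hN : Nat.card (tateNorm G M).ker * Nat.card (tateNorm G M).range = Nat.card M :=
    card_ker_mul_card_range _
  rw [hginv] at h0
  calc Nat.card (TateH0 G M)
      = Nat.card (TateH0 G M) * (Nat.card (tateNorm G M).range * Nat.card (Dmap M g).range)
        / (Nat.card (tateNorm G M).range * Nat.card (Dmap M g).range) := by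
        rw [Nat.mul_div_cancel _ (Nat.mul_pos Nat.card_pos Nat.card_pos)]
    _ = Nat.card (TateHneg1 G M) * (Nat.card (tateNorm G M).range * Nat.card (Dmap M g).range)
        / (Nat.card (tateNorm G M).range * Nat.card (Dmap M g).range) := by
        congr 1
        calc Nat.card (TateH0 G M) * (Nat.card (tateNorm G M).range * Nat.card (Dmap M g).range)
            = Nat.card (TateH0 G M) * Nat.card (tateNorm G M).range * Nat.card (Dmap M g).range := by
              ring
          _ = Nat.card (Dmap M g).ker * Nat.card (Dmap M g).range := by rw [h0]
          _ = Nat.card M := hD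
          _ = Nat.card (tateNorm G M).ker * Nat.card (tateNorm G M).range := hN.symm
          _ = Nat.card (TateHneg1 G M) * Nat.card (Dmap M g).range * Nat.card (tateNorm G M).range := by
              rw [h1]
          _ = Nat.card (TateHneg1 G M) * (Nat.card (tateNorm G M).range * Nat.card (Dmap M g).range) := by
              ring
    _ = Nat.card (TateHneg1 G M) := by
        rw [Nat.mul_div_cancel _ (Nat.mul_pos Nat.card_pos Nat.card_pos)]
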